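/- Let M ≥ 2 and 0 < ε ≤ 1/M. Among all probability vectors w on Fin M with w_i ≥ ε for all i, the score K(w) = −(1/M) ∑_i log(M w_i) is maximized exactly by the vectors having one coordinate equal to 1 − (M−1)ε and all others equal to ε. -/

import Mathlib

open Finset

private lemma chord_strict {ε L x : ℝ} (hε : 0 < ε) (h1 : ε < x) (h2 : x < L) :
    (L - x) * Real.log ε + (x - ε) * Real.log L < (L - ε) * Real.log x := by
  have hL : 0 < L := hε.trans (h1.trans h2)
  have hd : 0 < L - ε := by linarith
  have ha : 0 < (L - x) / (L - ε) := div_pos (by linarith) hd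
  have hb : 0 < (x - ε) / (L - ε) := div_pos (by linarith) hd
  have hab : (L - x) / (L - ε) + (x - ε) / (L - ε) = 1 := by field_simp; ring
  have key := strictConcaveOn_log_Ioi.2 (Set.mem_Ioi.2 hε) (Set.mem_Ioi.2 hL)
    (ne_of_lt (h1.trans h2)) ha hb hab
  simp only [smul_eq_mul] at key
  have hx : (L - x) / (L - ε) * ε + (x - ε) / (L - ε) * L = x := by
    field_simp; ring
  rw [hx] at key
  have key2 := mul_lt_mul_of_pos_left key hd
  have hexp : (L - ε) * ((L - x) / (L - ε) * Real.log ε + (x - ε) / (L - ε) * Real.log L)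
      = (L - x) * Real.log ε + (x - ε) * Real.log L := by
    field_simp
  linarith

private lemma chord_le {ε L x : ℝ} (hε : 0 < ε) (hx1 : ε ≤ x) (hx2 : x ≤ L) :
    (L - x) * Real.log ε + (x - ε) * Real.log L ≤ (L - ε) * Real.log x := by
  rcases eq_or_lt_of_le hx1 with h | h
  · subst h; ring_nf; exact le_refl _
  rcases eq_or_lt_of_le hx2 with h' | h'
  · subst h'; ring_nf; exact le_refl _
  exact le_of_lt (chord_strict hε h h')

theorem kl_score_maximized_by_near_onehot (M : ℕ) (hM : 2 ≤ M) (ε : ℝ) (hε : 0 < ε)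
    (hεM : ε ≤ 1 / M) (w : Fin M → ℝ) (hge : ∀ i, ε ≤ w i) (hsum : ∑ i, w i = 1) :
    -(1 / M : ℝ) * ∑ i, Real.log ((M : ℝ) * w i)
      ≤ -(1 / M : ℝ) * (Real.log ((M : ℝ) * (1 - ((M : ℝ) - 1) * ε))
          + ((M : ℝ) - 1) * Real.log ((M : ℝ) * ε)) ∧
    (-(1 / M : ℝ) * ∑ i, Real.log ((M : ℝ) * w i)
        = -(1 / M : ℝ) * (Real.log ((M : ℝ) * (1 - ((M : ℝ) - 1) * ε))
            + ((M : ℝ) - 1) * Real.log ((M : ℝ) * ε)) ↔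
      ∃ j, w j = 1 - ((M : ℝ) - 1) * ε ∧ ∀ i, i ≠ j → w i = ε) := by
  have hM0 : (0:ℝ) < M := by positivity
  have hMr2 : (2:ℝ) ≤ (M:ℝ) := by exact_mod_cast hM
  have hMε : (M:ℝ) * ε ≤ 1 := by
    have := (le_div_iff₀ hM0).mp hεM
    linarith
  set L : ℝ := 1 - ((M:ℝ) - 1) * ε with hL
  have hwpos : ∀ i, 0 < w i := fun i => lt_of_lt_of_le hε (hge i)
  have hMne : (M:ℝ) ≠ 0 := ne_of_gt hM0
  -- expand logs
  have hlogw : ∀ i, Real.log ((M:ℝ) * w i) = Real.log M + Real.log (w i) := by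
    intro i; rw [Real.log_mul hMne (ne_of_gt (hwpos i))]
  have hsumlog : ∑ i, Real.log ((M:ℝ) * w i) = (M:ℝ) * Real.log M + ∑ i, Real.log (w i) := by
    simp only [hlogw, Finset.sum_add_distrib, Finset.sum_const, Finset.card_univ,
      Fintype.card_fin, nsmul_eq_mul]
  rcases eq_or_lt_of_le hMε with hcrit | hlt
  · -- ε = 1/M case: all w i = ε, L = ε
    have hLe : L = ε := by rw [hL]; nlinarith
    have hall : ∀ i, w i = ε := by
      by_contra h
      push_neg at h
      obtain ⟨i, hi⟩ := h
      have hi' : ε < w i := lt_of_le_of_ne (hge i) (Ne.symm hi)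
      have : (1:ℝ) < ∑ j, w j := by
        calc (1:ℝ) = (M:ℝ) * ε := hcrit.symm
          _ = ∑ _j : Fin M, ε := by
              simp [Finset.sum_const, Finset.card_univ, mul_comm]
          _ < ∑ j, w j := by
              apply Finset.sum_lt_sum (fun j _ => hge j) ⟨i, Finset.mem_univ i, hi'⟩
      linarith
    have heq : ∑ i, Real.log ((M:ℝ) * w i)
        = Real.log ((M:ℝ) * L) + ((M:ℝ) - 1) * Real.log ((M:ℝ) * ε) := by
      rw [hLe]
      have : ∀ i : Fin M, Real.log ((M:ℝ) * w i) = Real.log ((M:ℝ) * ε) := by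
        intro i; rw [hall i]
      rw [Finset.sum_congr rfl (fun i _ => this i)]
      simp [Finset.sum_const, Finset.card_univ, nsmul_eq_mul]
      ring
    refine ⟨le_of_eq (by rw [heq]), iff_of_true (by rw [heq]) ?_⟩
    refine ⟨⟨0, by omega⟩, ?_, fun i _ => hall i⟩
    rw [hall, hLe]
  · -- main case: ε < L
    have hdL : 0 < L - ε := by rw [hL]; nlinarith
    have hεL : ε < L := by linarith
    have hLpos : 0 < L := hε.trans hεL
    -- each w i ≤ L
    have hwle : ∀ i, w i ≤ L := by
      intro i
      have hkey : ((M:ℝ) - 1) * ε ≤ ∑ j ∈ Finset.univ.erase i, w j := by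
        have hcard : (Finset.univ.erase i).card = M - 1 := by
          rw [Finset.card_erase_of_mem (Finset.mem_univ i), Finset.card_univ, Fintype.card_fin]
        have := Finset.card_nsmul_le_sum (Finset.univ.erase i) w ε (fun j _ => hge j)
        rw [hcard, nsmul_eq_mul] at this
        have hcast : ((M - 1 : ℕ) : ℝ) = (M:ℝ) - 1 := by
          rw [Nat.cast_sub (by omega)]; norm_num
        rwa [hcast] at this
      have hsplit : w i + ∑ j ∈ Finset.univ.erase i, w j = 1 := by
        rw [Finset.add_sum_erase _ w (Finset.mem_univ i)]; exact hsum
      rw [hL]; linarith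
    set g : Fin M → ℝ := fun i =>
      (L - ε) * Real.log (w i) - ((L - w i) * Real.log ε + (w i - ε) * Real.log L) with hg
    have hg0 : ∀ i, 0 ≤ g i := by
      intro i
      have := chord_le (L := L) hε (hge i) (hwle i)
      simp only [hg]; linarith
    have hsumg : ∑ i, g i
        = (L - ε) * (∑ i, Real.log (w i) - (Real.log L + ((M:ℝ) - 1) * Real.log ε)) := by
      simp only [hg]
      rw [Finset.sum_sub_distrib, Finset.sum_add_distrib, ← Finset.mul_sum]
      have h1 : ∑ i, (L - w i) = (M:ℝ) * L - 1 := by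
        rw [Finset.sum_sub_distrib, hsum, Finset.sum_const, Finset.card_univ, Fintype.card_fin,
          nsmul_eq_mul]
      have h2 : ∑ i, (w i - ε) = 1 - (M:ℝ) * ε := by
        rw [Finset.sum_sub_distrib, hsum, Finset.sum_const, Finset.card_univ, Fintype.card_fin,
          nsmul_eq_mul]
      rw [← Finset.sum_mul, ← Finset.sum_mul, h1, h2]
      rw [hL]
      ring
    -- key inequality on S
    have hfactor : -(1 / M : ℝ) * ∑ i, Real.log ((M : ℝ) * w i)
          - -(1 / M : ℝ) * (Real.log ((M : ℝ) * L) + ((M : ℝ) - 1) * Real.log ((M : ℝ) * ε))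
        = -(1/M) * (∑ i, Real.log (w i) - (Real.log L + ((M:ℝ) - 1) * Real.log ε)) := by
      rw [hsumlog, Real.log_mul hMne (ne_of_gt hLpos), Real.log_mul hMne (ne_of_gt hε)]
      ring
    have hSge : 0 ≤ ∑ i, Real.log (w i) - (Real.log L + ((M:ℝ) - 1) * Real.log ε) := by
      have hs := Finset.sum_nonneg (fun i (_ : i ∈ Finset.univ) => hg0 i)
      rw [hsumg] at hs
      exact nonneg_of_mul_nonneg_right hs hdL
    constructor
    · nlinarith [hfactor, hSge, hM0]
    · -- equality iff
      have heqiff : -(1 / M : ℝ) * ∑ i, Real.log ((M : ℝ) * w i)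
            = -(1 / M : ℝ) * (Real.log ((M : ℝ) * L) + ((M : ℝ) - 1) * Real.log ((M : ℝ) * ε))
          ↔ ∑ i, Real.log (w i) = Real.log L + ((M:ℝ) - 1) * Real.log ε := by
        constructor
        · intro h
          have h0 : -(1/M : ℝ) * (∑ i, Real.log (w i)
              - (Real.log L + ((M:ℝ) - 1) * Real.log ε)) = 0 := by
            rw [← hfactor]; linarith
          have hne : -(1/M : ℝ) ≠ 0 := by
            simp [hMne]
          have := mul_eq_zero.mp h0
          rcases this with h' | h'
          · exact absurd h' hne
          · linarith
        · intro h
          have : ∑ i, Real.log (w i) - (Real.log L + ((M:ℝ) - 1) * Real.log ε) = 0 := by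
            linarith
          have := hfactor
          rw [‹∑ i, Real.log (w i) - (Real.log L + ((M:ℝ) - 1) * Real.log ε) = 0›] at this
          linarith
      rw [heqiff]
      constructor
      · intro hSeq
        -- all g i = 0
        have hsg0 : ∑ i, g i = 0 := by rw [hsumg, hSeq]; ring
        have hgz : ∀ i, g i = 0 := by
          intro i
          have := (Finset.sum_eq_zero_iff_of_nonneg
            (fun i (_ : i ∈ Finset.univ) => hg0 i)).mp hsg0 i (Finset.mem_univ i)
          exact this
        have hvals : ∀ i, w i = ε ∨ w i = L := by
          intro i
          by_contra hcon
          push_neg at hcon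
          have h1 : ε < w i := lt_of_le_of_ne (hge i) (Ne.symm hcon.1)
          have h2 : w i < L := lt_of_le_of_ne (hwle i) hcon.2
          have := chord_strict (L := L) hε h1 h2
          have := hgz i
          simp only [hg] at this
          linarith [chord_strict (L := L) hε h1 h2]
        -- find the j with w j = L
        have hex : ∃ j, w j = L := by
          by_contra hc
          push_neg at hc
          have hall : ∀ i, w i = ε := by
            intro i
            rcases hvals i with h | h
            · exact h
            · exact absurd h (hc i)
          have : ∑ i, w i = (M:ℝ) * ε := by
            rw [Finset.sum_congr rfl (fun i _ => hall i)]
            simp [Finset.sum_const, Finset.card_univ, mul_comm]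
          rw [hsum] at this
          linarith
        obtain ⟨j, hj⟩ := hex
        refine ⟨j, hj, ?_⟩
        intro i hij
        rcases hvals i with h | h
        · exact h
        · exfalso
          -- two coordinates equal to L: sum too big
          have hsum2 : (2:ℝ) * L + ((M:ℝ) - 2) * ε ≤ ∑ k, w k := by
            have hsub : ({i, j} : Finset (Fin M)) ⊆ Finset.univ := Finset.subset_univ _
            have hij' : i ≠ j := hij
            have hsum_pair : ∑ k ∈ ({i, j} : Finset (Fin M)), w k = 2 * L := by
              rw [Finset.sum_insert (by simp [hij']), Finset.sum_singleton, h, hj]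
              ring
            have hrest : ((M:ℝ) - 2) * ε ≤ ∑ k ∈ Finset.univ \ {i, j}, w k := by
              have hcard : (Finset.univ \ ({i, j} : Finset (Fin M))).card = M - 2 := by
                rw [Finset.card_sdiff_of_subset (Finset.subset_univ _), Finset.card_univ,
                  Fintype.card_fin, Finset.card_insert_of_notMem (by simp [hij']),
                  Finset.card_singleton]
              have := Finset.card_nsmul_le_sum (Finset.univ \ ({i, j} : Finset (Fin M))) w ε
                (fun k _ => hge k)
              rw [hcard, nsmul_eq_mul] at this
              have hcast : ((M - 2 : ℕ) : ℝ) = (M:ℝ) - 2 := by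
                rw [Nat.cast_sub hM]; norm_num
              rwa [hcast] at this
            have hsplit : ∑ k ∈ Finset.univ \ ({i, j} : Finset (Fin M)), w k
                + ∑ k ∈ ({i, j} : Finset (Fin M)), w k = ∑ k, w k :=
              Finset.sum_sdiff (Finset.subset_univ _)
            rw [← hsplit, hsum_pair]
            linarith
          rw [hsum, hL] at hsum2
          nlinarith
      · intro ⟨j, hj, hrest⟩
        -- compute the sum directly
        have : ∑ i, Real.log (w i)
            = Real.log (w j) + ∑ i ∈ Finset.univ.erase j, Real.log (w i) :=
          (Finset.add_sum_erase _ _ (Finset.mem_univ j)).symm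
        rw [this, hj]
        have hcard : (Finset.univ.erase j).card = M - 1 := by
          rw [Finset.card_erase_of_mem (Finset.mem_univ j), Finset.card_univ, Fintype.card_fin]
        have : ∑ i ∈ Finset.univ.erase j, Real.log (w i)
            = ((M:ℝ) - 1) * Real.log ε := by
          rw [Finset.sum_congr rfl (fun i hi => by
            rw [hrest i (Finset.ne_of_mem_erase hi)])]
          rw [Finset.sum_const, hcard, nsmul_eq_mul]
          have hcast : ((M - 1 : ℕ) : ℝ) = (M:ℝ) - 1 := by
            rw [Nat.cast_sub (by omega)]; norm_num
          rw [hcast]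
        rw [this]
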